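/- Let λ ∈ (0,1] and α ∈ ℂ \ {0}, and define φ(z) = αz/((1+z)(1+λz)) for z ∈ 𝔻. Then φ is univalent (injective) on 𝔻 and dist(φ(0), ∂φ(𝔻)) = |α|/(2(1+λ)), i.e. the Euclidean distance from 0 = φ(0) to the boundary of the image φ(𝔻) equals |α|/(2(1+λ)). -/
import Mathlib


open Complex Metric Set

noncomputable section

/-- The open unit disk in the complex plane. -/
def unitDisk : Set ℂ := Metric.ball 0 1

/-- `h` is subordinate to `φ` on the unit disk: `h = φ ∘ ω` for some analytic
self-map `ω` of the unit disk fixing the origin. -/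
def Subordinate (h φ : ℂ → ℂ) : Prop :=
  ∃ ω : ℂ → ℂ, AnalyticOnNhd ℂ ω unitDisk ∧ ω 0 = 0 ∧
    Set.MapsTo ω unitDisk unitDisk ∧ ∀ z ∈ unitDisk, h z = φ (ω z)

/-- **Example (a).** For `λ ∈ (0,1]` and `α ≠ 0`,
`φ(z) = αz/((1+z)(1+λz))` is univalent on the unit disk and
`dist(φ(0), ∂φ(𝔻)) = |α|/(2(1+λ))`. -/
theorem example_a_univalent_dist
    (lam : ℝ) (hlam : lam ∈ Set.Ioc (0 : ℝ) 1) (α : ℂ) (hα : α ≠ 0)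
    (φ : ℂ → ℂ)
    (hφ : ∀ z : ℂ, φ z = α * z / ((1 + z) * (1 + (lam : ℂ) * z))) :
    Set.InjOn φ unitDisk ∧
    Metric.infDist (φ 0) (frontier (φ '' unitDisk)) = ‖α‖ / (2 * (1 + lam)) := by
  obtain ⟨hl0, hl1⟩ := hlam
  set l : ℂ := (lam : ℂ) with hl_def
  have hlnorm : ‖l‖ = lam := by
    rw [hl_def, Complex.norm_real, Real.norm_eq_abs, abs_of_pos hl0]
  have hlne : l ≠ 0 := by
    rw [hl_def]
    exact_mod_cast hl0.ne'
  have hmem : ∀ z : ℂ, z ∈ unitDisk ↔ ‖z‖ < 1 := by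
    intro z; simp [unitDisk, mem_ball_zero_iff]
  have hden : ∀ z : ℂ, ‖z‖ < 1 → (1 + z ≠ 0 ∧ 1 + l * z ≠ 0) := by
    intro z hz
    constructor
    · intro h
      have hz1 : z = -1 := by linear_combination h
      rw [hz1] at hz; simp at hz
    · intro h
      have hz1 : l * z = -1 := by linear_combination h
      have h2 : ‖l * z‖ = 1 := by rw [hz1]; simp
      rw [norm_mul, hlnorm] at h2
      nlinarith [norm_nonneg z]
  -- Injectivity
  have hinj : Set.InjOn φ unitDisk := by
    intro z hz w hw h
    rw [hmem] at hz hw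
    obtain ⟨hz1, hz2⟩ := hden z hz
    obtain ⟨hw1, hw2⟩ := hden w hw
    rw [hφ z, hφ w] at h
    rw [div_eq_div_iff (mul_ne_zero hz1 hz2) (mul_ne_zero hw1 hw2)] at h
    have key : α * ((z - w) * (1 - l * z * w)) = 0 := by linear_combination h
    have h2 : (z - w) * (1 - l * z * w) = 0 := by
      rcases mul_eq_zero.1 key with h' | h'
      · exact absurd h' hα
      · exact h'
    rcases mul_eq_zero.1 h2 with h' | h'
    · linear_combination h'
    · exfalso
      have h3 : l * z * w = 1 := by linear_combination -h'
      have h4 : ‖l * z * w‖ = 1 := by rw [h3]; simp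
      rw [norm_mul, norm_mul, hlnorm] at h4
      have h5 : ‖z‖ * ‖w‖ < 1 := by nlinarith [norm_nonneg z, norm_nonneg w]
      nlinarith [mul_nonneg (norm_nonneg z) (norm_nonneg w)]
  refine ⟨hinj, ?_⟩
  have h2l : (0:ℝ) < 2 * (1 + lam) := by linarith
  set r : ℝ := ‖α‖ / (2 * (1 + lam)) with hr_def
  have hr0 : 0 < r := div_pos (norm_pos_iff.2 hα) h2l
  -- the ball of radius r around 0 is contained in the image
  have hball : ball (0:ℂ) r ⊆ φ '' unitDisk := by
    intro w hw
    rw [mem_ball_zero_iff] at hw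
    by_cases hw0 : w = 0
    · refine ⟨0, (hmem 0).2 (by simp), ?_⟩
      rw [hφ]; simp [hw0]
    by_contra hnot
    obtain ⟨d, hd⟩ : ∃ d : ℂ, d ^ 2 = (α - (1 + l) * w) ^ 2 - 4 * l * w ^ 2 :=
      IsAlgClosed.exists_pow_nat_eq _ zero_lt_two
    have h2lw : (2 : ℂ) * l * w ≠ 0 := mul_ne_zero (mul_ne_zero two_ne_zero hlne) hw0
    set u : ℂ := (α - (1 + l) * w + d) / (2 * l * w) with hu_def
    set v : ℂ := (α - (1 + l) * w - d) / (2 * l * w) with hv_def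
    have hprod : (α - (1 + l) * w + d) * (α - (1 + l) * w - d) = 4 * l * w ^ 2 := by
      linear_combination -hd
    have huv : l * (u * v) = 1 := by
      rw [hu_def, hv_def, div_mul_div_comm, hprod]
      field_simp
      ring
    have hsum : l * w * (u + v) = α - (1 + l) * w := by
      rw [hu_def, hv_def]
      field_simp
      ring
    have himg : ∀ z : ℂ, l * w * z ^ 2 + ((1 + l) * w - α) * z + w = 0 → ¬ ‖z‖ < 1 := by
      intro z hz hz1
      apply hnot
      refine ⟨z, (hmem z).2 hz1, ?_⟩
      obtain ⟨h1, h2⟩ := hden z hz1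
      rw [hφ, div_eq_iff (mul_ne_zero h1 h2)]
      linear_combination -hz
    have hrootu : l * w * u ^ 2 + ((1 + l) * w - α) * u + w = 0 := by
      linear_combination u * hsum - w * huv
    have hrootv : l * w * v ^ 2 + ((1 + l) * w - α) * v + w = 0 := by
      linear_combination v * hsum - w * huv
    have hu1 : 1 ≤ ‖u‖ := not_lt.1 (himg u hrootu)
    have hv1 : 1 ≤ ‖v‖ := not_lt.1 (himg v hrootv)
    have hune : u ≠ 0 := by
      intro h; rw [h] at huv; simp at huv
    -- norm relations
    have hlv : l * v = u⁻¹ :=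
      eq_inv_of_mul_eq_one_right (by linear_combination huv)
    have hlvnorm : lam * ‖v‖ = ‖u‖⁻¹ := by
      rw [← hlnorm, ← norm_mul, hlv, norm_inv]
    have hs0 : (0:ℝ) < ‖u‖ := lt_of_lt_of_le one_pos hu1
    have hls : lam * ‖u‖ ≤ 1 := by
      have h1 : lam ≤ ‖u‖⁻¹ := by
        rw [← hlvnorm]
        nlinarith
      calc lam * ‖u‖ ≤ ‖u‖⁻¹ * ‖u‖ := by nlinarith
        _ = 1 := inv_mul_cancel₀ (ne_of_gt hs0)
    have hα_eq : α = w * ((1 + l) + (l * u + l * v)) := by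
      linear_combination -hsum
    have h1lnorm : ‖(1:ℂ) + l‖ = 1 + lam := by
      rw [show (1:ℂ) + l = ((1 + lam : ℝ) : ℂ) by push_cast; ring, Complex.norm_real,
        Real.norm_eq_abs, abs_of_pos (by linarith)]
    have hbound : ‖(1:ℂ) + l + (l * u + l * v)‖ ≤ 2 * (1 + lam) := by
      have h1 : ‖(1:ℂ) + l + (l * u + l * v)‖ ≤ ‖(1:ℂ) + l‖ + (‖l * u‖ + ‖l * v‖) :=
        (norm_add_le _ _).trans (by gcongr; exact norm_add_le _ _)
      have h2 : ‖l * u‖ = lam * ‖u‖ := by rw [norm_mul, hlnorm]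
      have h3 : ‖l * v‖ = lam * ‖v‖ := by rw [norm_mul, hlnorm]
      have h4 : lam * ‖u‖ + ‖u‖⁻¹ ≤ 1 + lam := by
        have hss : ‖u‖ * ‖u‖⁻¹ = 1 := mul_inv_cancel₀ (ne_of_gt hs0)
        nlinarith [mul_nonneg (sub_nonneg.2 hu1) (sub_nonneg.2 hls)]
      rw [h2, h3, hlvnorm, h1lnorm] at h1
      linarith
    have hfin : ‖α‖ ≤ ‖w‖ * (2 * (1 + lam)) := by
      calc ‖α‖ = ‖w‖ * ‖(1:ℂ) + l + (l * u + l * v)‖ := by rw [hα_eq, norm_mul]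
        _ ≤ ‖w‖ * (2 * (1 + lam)) := by
            apply mul_le_mul_of_nonneg_left hbound (norm_nonneg w)
    have : ‖w‖ * (2 * (1 + lam)) < r * (2 * (1 + lam)) := by
      apply mul_lt_mul_of_pos_right hw h2l
    rw [hr_def, div_mul_cancel₀ _ (ne_of_gt h2l)] at this
    linarith
  -- analyticity and openness of the image
  have heq : φ = fun z => α * z / ((1 + z) * (1 + l * z)) := funext hφ
  have hana : AnalyticOnNhd ℂ φ unitDisk := by
    rw [heq]
    apply AnalyticOnNhd.div
    · exact analyticOnNhd_const.mul analyticOnNhd_id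
    · exact (analyticOnNhd_const.add analyticOnNhd_id).mul
        (analyticOnNhd_const.add (analyticOnNhd_const.mul analyticOnNhd_id))
    · intro z hz
      obtain ⟨h1, h2⟩ := hden z ((hmem z).1 hz)
      exact mul_ne_zero h1 h2
  have hconn : IsPreconnected unitDisk := (convex_ball (0:ℂ) 1).isPreconnected
  have hopen : IsOpen (φ '' unitDisk) := by
    rcases hana.is_constant_or_isOpen hconn with ⟨c, hc⟩ | hop
    · exfalso
      have h0 : φ 0 = c := hc 0 ((hmem 0).2 (by simp))
      have hhalf : φ (1/2) = c := hc (1/2) ((hmem (1/2)).2 (by norm_num))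
      have hφ0 : φ 0 = 0 := by rw [hφ]; simp
      have hd2 := hden (1/2) (by norm_num)
      have : φ (1/2) ≠ 0 := by
        rw [hφ]
        apply div_ne_zero (mul_ne_zero hα (by norm_num)) (mul_ne_zero hd2.1 hd2.2)
      rw [hhalf, ← h0, hφ0] at this
      exact this rfl
    · exact hop unitDisk subset_rfl Metric.isOpen_ball
  -- the boundary point p
  set p : ℂ := α / (2 * (1 + l)) with hp_def
  have h2lc_eq : (2 * (1 + l) : ℂ) = ((2 * (1 + lam) : ℝ) : ℂ) := by push_cast; ring
  have h2lc : (2 * (1 + l) : ℂ) ≠ 0 := by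
    rw [h2lc_eq]
    exact_mod_cast ne_of_gt h2l
  have hpnorm : ‖p‖ = r := by
    rw [hp_def, norm_div, h2lc_eq, Complex.norm_real, Real.norm_eq_abs, abs_of_pos h2l, hr_def]
  have hp_notin : p ∉ φ '' unitDisk := by
    rintro ⟨z, hz, hzp⟩
    rw [hmem] at hz
    obtain ⟨h1, h2⟩ := hden z hz
    rw [hφ, hp_def, div_eq_div_iff (mul_ne_zero h1 h2) h2lc] at hzp
    have key : α * ((l * z - 1) * (z - 1)) = 0 := by linear_combination -hzp
    have h3 : (l * z - 1) * (z - 1) = 0 := by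
      rcases mul_eq_zero.1 key with h' | h'
      · exact absurd h' hα
      · exact h'
    rcases mul_eq_zero.1 h3 with h' | h'
    · have : l * z = 1 := by linear_combination h'
      have h4 : ‖l * z‖ = 1 := by rw [this]; simp
      rw [norm_mul, hlnorm] at h4
      nlinarith [norm_nonneg z]
    · have : z = 1 := by linear_combination h'
      rw [this] at hz; simp at hz
  have hc1 : ContinuousAt φ 1 := by
    rw [heq]
    apply ContinuousAt.div
    · fun_prop
    · fun_prop
    · show (1 + (1:ℂ)) * (1 + l * 1) ≠ 0
      rw [show (1 + (1:ℂ)) * (1 + l * 1) = 2 * (1 + l) by ring]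
      exact h2lc
  have h1cl : (1:ℂ) ∈ closure unitDisk := by
    rw [show unitDisk = ball (0:ℂ) 1 from rfl, closure_ball (0:ℂ) one_ne_zero]
    simp
  have hφ1 : φ 1 = p := by
    rw [hφ, hp_def, show (1 + (1:ℂ)) * (1 + l * 1) = 2 * (1 + l) from by ring, mul_one]
  have hp_cl : p ∈ closure (φ '' unitDisk) :=
    hφ1 ▸ hc1.continuousWithinAt.mem_closure_image h1cl
  have hp_frontier : p ∈ frontier (φ '' unitDisk) := by
    rw [hopen.frontier_eq]
    exact ⟨hp_cl, hp_notin⟩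
  -- conclusion
  have hφ0 : φ 0 = 0 := by rw [hφ]; simp
  rw [hφ0]
  apply le_antisymm
  · calc Metric.infDist 0 (frontier (φ '' unitDisk)) ≤ dist 0 p :=
          infDist_le_dist_of_mem hp_frontier
      _ = r := by rw [dist_zero_left, hpnorm]
  · by_contra hlt
    push_neg at hlt
    rw [infDist_lt_iff ⟨p, hp_frontier⟩] at hlt
    obtain ⟨y, hyF, hyd⟩ := hlt
    rw [dist_zero_left] at hyd
    have hy_img : y ∈ φ '' unitDisk := hball (mem_ball_zero_iff.2 hyd)
    rw [hopen.frontier_eq] at hyF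
    exact hyF.2 hy_img
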